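/- Let E be a real inner product space, N ≥ 1, K ≥ 1, θ_1,…,θ_N ∈ E, w ∈ E, and w̄ = (1/N)·Σ_{i=1}^N θ_i. For each tuple s : {1,…,K} → {1,…,N}, let W(s) = (1/K)·Σ_{k=1}^K θ_{s(k)} be the average over the sampled clients. Then the average over all N^K tuples satisfies (1/N^K)·Σ_s ‖W(s) − w̄‖² ≤ (1/(K·N))·Σ_{i=1}^N ‖θ_i − w̄‖². Moreover, if ᾱ > 0, ψ ≥ 0, B ≥ 0, f_i : E → ℝ are differentiable with f = (1/N)·Σ_i f_i, ‖θ_i − w‖ ≤ ((1 + ψ)/ᾱ)·‖∇f_i(w)‖ for all i, and (1/N)·Σ_i ‖∇f_i(w)‖² ≤ B²·‖∇f(w)‖², then (1/N^K)·Σ_s ‖W(s) − w̄‖² ≤ (2·B²·(1 + ψ)²/(K·ᾱ²))·‖∇f(w)‖². -/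

import Mathlib

open Finset

lemma fedssg_var_key {E : Type*} [NormedAddCommGroup E] [InnerProductSpace ℝ E]
    (N : ℕ) (hN : (N:ℝ) ≠ 0) (x : Fin N → E) (hx : ∑ i, x i = 0) :
    ∀ K : ℕ, ∑ s : Fin K → Fin N, ‖∑ k, x (s k)‖ ^ 2
      = (K : ℝ) * (N : ℝ) ^ K / N * ∑ i, ‖x i‖ ^ 2 := by
  intro K
  induction K with
  | zero => simp
  | succ K ih =>
    have h1 : ∑ s : Fin (K+1) → Fin N, ‖∑ k, x (s k)‖ ^ 2
        = ∑ p : Fin N × (Fin K → Fin N), ‖x p.1 + ∑ k, x (p.2 k)‖ ^ 2 := by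
      rw [← Equiv.sum_comp (Fin.consEquiv (fun _ => Fin N))
        (fun s => ‖∑ k, x (s k)‖ ^ 2)]
      refine Finset.sum_congr rfl fun p _ => ?_
      simp [Fin.consEquiv, Fin.sum_univ_succ]
    rw [h1, Fintype.sum_prod_type]
    have h2 : ∀ (a : E) (b : E), ‖a + b‖ ^ 2 = ‖a‖^2 + 2 * inner ℝ a b + ‖b‖^2 :=
      fun a b => norm_add_sq_real a b
    simp only [h2]
    rw [Finset.sum_comm]
    simp only [Finset.sum_add_distrib]
    have hcard : (Fintype.card (Fin K → Fin N) : ℝ) = (N:ℝ)^K := by simp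
    have e1 : ∑ s : Fin K → Fin N, ∑ a : Fin N, ‖x a‖^2 = (N:ℝ)^K * ∑ a, ‖x a‖^2 := by
      rw [Finset.sum_const, card_univ, nsmul_eq_mul, hcard]
    have e2 : ∀ s : Fin K → Fin N, ∑ a : Fin N, 2 * (inner ℝ (x a) (∑ k, x (s k)) : ℝ) = 0 := by
      intro s
      rw [← Finset.mul_sum, ← sum_inner, hx, inner_zero_left, mul_zero]
    have e3 : ∑ s : Fin K → Fin N, ∑ a : Fin N, ‖∑ k, x (s k)‖^2
        = (N:ℝ) * ∑ s : Fin K → Fin N, ‖∑ k, x (s k)‖^2 := by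
      simp only [Finset.sum_const, card_univ, Fintype.card_fin, nsmul_eq_mul, ← Finset.mul_sum]
    rw [e1, Finset.sum_congr rfl (fun s _ => e2 s), e3, ih]
    rw [Finset.sum_const_zero]
    push_cast
    field_simp
    ring

lemma fedssg_bias {E : Type*} [NormedAddCommGroup E] [InnerProductSpace ℝ E]
    (N : ℕ) (θ : Fin N → E) (w wbar : E)
    (hx : ∑ i, (θ i - wbar) = 0) :
    ∑ i, ‖θ i - wbar‖ ^ 2 ≤ ∑ i, ‖θ i - w‖ ^ 2 := by
  have h : ∀ i, ‖θ i - w‖ ^ 2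
      = ‖θ i - wbar‖ ^ 2 + 2 * inner ℝ (θ i - wbar) (wbar - w) + ‖wbar - w‖ ^ 2 := by
    intro i
    have e : θ i - w = (θ i - wbar) + (wbar - w) := by abel
    rw [e, norm_add_sq_real]
  simp only [h]
  simp only [Finset.sum_add_distrib]
  have hc : ∑ i : Fin N, 2 * (inner ℝ (θ i - wbar) (wbar - w) : ℝ) = 0 := by
    rw [← Finset.mul_sum, ← sum_inner, hx, inner_zero_left, mul_zero]
  rw [hc]
  have : (0:ℝ) ≤ ∑ _i : Fin N, ‖wbar - w‖ ^ 2 :=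
    Finset.sum_nonneg fun _ _ => sq_nonneg _
  linarith

/-- Sampling variance of the partially aggregated model around the
full-participation average (Eq. (32) of the FedSSG proof). -/
theorem fedssg_sampling_variance
    {E : Type*} [NormedAddCommGroup E] [InnerProductSpace ℝ E] [CompleteSpace E]
    (N K : ℕ) (hN : 1 ≤ N) (hK : 1 ≤ K)
    (θ : Fin N → E) (w wbar : E)
    (hwbar : wbar = (1 / (N : ℝ)) • ∑ i, θ i) :
    ((1 / (N : ℝ) ^ K) * ∑ s : Fin K → Fin N,
        ‖(1 / (K : ℝ)) • ∑ k, θ (s k) - wbar‖ ^ 2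
      ≤ (1 / ((K : ℝ) * N)) * ∑ i, ‖θ i - wbar‖ ^ 2)
    ∧ ∀ (αbar ψ B : ℝ) (f : Fin N → E → ℝ),
        0 < αbar → 0 ≤ ψ → 0 ≤ B →
        (∀ i, Differentiable ℝ (f i)) →
        (∀ i, ‖θ i - w‖ ≤ ((1 + ψ) / αbar) * ‖gradient (f i) w‖) →
        ((1 / (N : ℝ)) * ∑ i, ‖gradient (f i) w‖ ^ 2
          ≤ B ^ 2 * ‖gradient (fun x => (1 / (N : ℝ)) * ∑ i, f i x) w‖ ^ 2) →
        (1 / (N : ℝ) ^ K) * ∑ s : Fin K → Fin N,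
            ‖(1 / (K : ℝ)) • ∑ k, θ (s k) - wbar‖ ^ 2
          ≤ (2 * B ^ 2 * (1 + ψ) ^ 2 / ((K : ℝ) * αbar ^ 2))
              * ‖gradient (fun x => (1 / (N : ℝ)) * ∑ i, f i x) w‖ ^ 2 := by
  have hN0 : (N:ℝ) ≠ 0 := by positivity
  have hK0 : (K:ℝ) ≠ 0 := by positivity
  set x : Fin N → E := fun i => θ i - wbar with hxdef
  have hx : ∑ i, x i = 0 := by
    simp only [hxdef, Finset.sum_sub_distrib, Finset.sum_const, card_univ,
      Fintype.card_fin, hwbar]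
    rw [sub_eq_zero, ← Nat.cast_smul_eq_nsmul ℝ, smul_smul, mul_one_div, div_self hN0, one_smul]
  have hterm : ∀ s : Fin K → Fin N,
      ‖(1 / (K : ℝ)) • ∑ k, θ (s k) - wbar‖ ^ 2
        = (1 / (K:ℝ)^2) * ‖∑ k, x (s k)‖ ^ 2 := by
    intro s
    have : (1 / (K : ℝ)) • ∑ k, θ (s k) - wbar = (1 / (K : ℝ)) • ∑ k, x (s k) := by
      simp only [hxdef, Finset.sum_sub_distrib, smul_sub, Finset.sum_const, card_univ,
        Fintype.card_fin, smul_smul]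
      rw [← Nat.cast_smul_eq_nsmul ℝ, smul_smul, mul_comm, mul_one_div, div_self hK0, one_smul]
    rw [this, norm_smul]
    simp [mul_pow, abs_of_nonneg (by positivity : (0:ℝ) ≤ 1 / (K:ℝ))]
  have hmain : (1 / (N : ℝ) ^ K) * ∑ s : Fin K → Fin N,
      ‖(1 / (K : ℝ)) • ∑ k, θ (s k) - wbar‖ ^ 2
      = (1 / ((K : ℝ) * N)) * ∑ i, ‖x i‖ ^ 2 := by
    rw [Finset.sum_congr rfl (fun s _ => hterm s), ← Finset.mul_sum,
      fedssg_var_key N hN0 x hx K]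
    field_simp
  constructor
  · exact le_of_eq hmain
  · intro αbar ψ B f hα hψ hB _hdiff hθ hdis
    set G := ‖gradient (fun x => (1 / (N : ℝ)) * ∑ i, f i x) w‖ with hG
    have hα0 : αbar ≠ 0 := ne_of_gt hα
    rw [hmain]
    have step1 : ∑ i, ‖x i‖ ^ 2 ≤ ∑ i, ‖θ i - w‖ ^ 2 :=
      fedssg_bias N θ w wbar hx
    have step2 : ∑ i, ‖θ i - w‖ ^ 2 ≤ ((1+ψ)/αbar)^2 * ∑ i, ‖gradient (f i) w‖ ^ 2 := by
      rw [Finset.mul_sum]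
      refine Finset.sum_le_sum fun i _ => ?_
      have h1 := hθ i
      have h2 : ‖θ i - w‖ ^ 2 ≤ (((1+ψ)/αbar) * ‖gradient (f i) w‖) ^ 2 := by
        apply pow_le_pow_left₀ (norm_nonneg _) h1
      calc ‖θ i - w‖ ^ 2 ≤ (((1+ψ)/αbar) * ‖gradient (f i) w‖) ^ 2 := h2
        _ = ((1+ψ)/αbar)^2 * ‖gradient (f i) w‖ ^ 2 := by ring
    have step3 : ∑ i, ‖gradient (f i) w‖ ^ 2 ≤ (N:ℝ) * (B ^ 2 * G ^ 2) := by
      have h := mul_le_mul_of_nonneg_left hdis (le_of_lt (by positivity : (0:ℝ) < N))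
      rw [← mul_assoc, mul_one_div, div_self hN0, one_mul] at h
      linarith
    have hcoef : (0:ℝ) < (K:ℝ) * N := by positivity
    calc (1 / ((K : ℝ) * N)) * ∑ i, ‖x i‖ ^ 2
        ≤ (1 / ((K : ℝ) * N)) * (((1+ψ)/αbar)^2 * ((N:ℝ) * (B ^ 2 * G ^ 2))) := by
          apply mul_le_mul_of_nonneg_left _ (by positivity)
          calc ∑ i, ‖x i‖ ^ 2 ≤ ((1+ψ)/αbar)^2 * ∑ i, ‖gradient (f i) w‖ ^ 2 :=
                le_trans step1 step2
            _ ≤ ((1+ψ)/αbar)^2 * ((N:ℝ) * (B ^ 2 * G ^ 2)) :=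
                mul_le_mul_of_nonneg_left step3 (by positivity)
      _ = (B ^ 2 * (1+ψ)^2 / ((K:ℝ) * αbar^2)) * G ^ 2 := by
          field_simp
      _ ≤ (2 * B ^ 2 * (1+ψ)^2 / ((K:ℝ) * αbar^2)) * G ^ 2 := by
          apply mul_le_mul_of_nonneg_right _ (sq_nonneg _)
          apply div_le_div_of_nonneg_right _ (by positivity)
          · nlinarith [sq_nonneg B, sq_nonneg (1+ψ)]
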